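/- Let v_1, …, v_k ∈ ℤ^N. Then Σ_{1≤i,j≤k} |[v_i]_+ − [v_j]_+| ≤ Σ_{1≤i,j≤k} |v_i − v_j|₂², and equality holds if and only if there is a permutation of the indices after which v_1 ≥ v_2 ≥ ⋯ ≥ v_k componentwise and |v_i − v_j|_∞ ≤ 1 for all i, j. -/

import Mathlib

lemma myAbsLeSq (x : ℤ) : |x| ≤ x ^ 2 := by
  rcases eq_or_ne x 0 with h | h
  · simp [h]
  · have h1 : (1 : ℤ) ≤ |x| := Int.one_le_abs h
    calc |x| = 1 * |x| := (one_mul _).symm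
    _ ≤ |x| * |x| := by exact mul_le_mul_of_nonneg_right h1 (abs_nonneg x)
    _ = x ^ 2 := by rw [abs_mul_abs_self x, sq]

lemma myAbsEqSqIff (x : ℤ) : |x| = x ^ 2 ↔ |x| ≤ 1 := by
  constructor
  · intro h
    by_contra hc
    push_neg at hc
    have h2 : (2 : ℤ) ≤ |x| := hc
    have h3 : 2 * |x| ≤ |x| * |x| := mul_le_mul_of_nonneg_right h2 (abs_nonneg x)
    rw [abs_mul_abs_self x, ← sq] at h3
    omega
  · intro h
    obtain ⟨h1, h2⟩ := abs_le.mp h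
    interval_cases x <;> decide

lemma mySignIff {N : ℕ} (d : Fin N → ℤ) :
    |∑ l, d l| = ∑ l, |d l| ↔ (∀ l, 0 ≤ d l) ∨ (∀ l, d l ≤ 0) := by
  constructor
  · intro h
    by_contra hc
    push_neg at hc
    obtain ⟨⟨a, ha⟩, ⟨b, hb⟩⟩ := hc
    rcases abs_cases (∑ l, d l) with ⟨he, _⟩ | ⟨he, _⟩
    · have : ∑ l, d l < ∑ l, |d l| := by
        apply Finset.sum_lt_sum (fun l _ => le_abs_self _) ⟨a, Finset.mem_univ a, by
          rw [abs_of_neg ha]; linarith⟩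
      omega
    · have : ∑ l, -d l < ∑ l, |d l| := by
        apply Finset.sum_lt_sum (fun l _ => neg_le_abs _) ⟨b, Finset.mem_univ b, by
          rw [abs_of_pos hb]; linarith⟩
      rw [Finset.sum_neg_distrib] at this
      omega
  · rintro (h | h)
    · rw [abs_of_nonneg (Finset.sum_nonneg fun l _ => h l)]
      exact Finset.sum_congr rfl fun l _ => (abs_of_nonneg (h l)).symm
    · rw [abs_of_nonpos (Finset.sum_nonpos fun l _ => h l), ← Finset.sum_neg_distrib]
      exact Finset.sum_congr rfl fun l _ => (abs_of_nonpos (h l)).symm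

lemma myPair {N : ℕ} (d : Fin N → ℤ) :
    |∑ l, d l| = ∑ l, d l ^ 2 ↔
      (((∀ l, 0 ≤ d l) ∨ (∀ l, d l ≤ 0)) ∧ ∀ l, |d l| ≤ 1) := by
  have h1 : |∑ l, d l| ≤ ∑ l, |d l| := Finset.abs_sum_le_sum_abs _ _
  have h2 : ∑ l, |d l| ≤ ∑ l, d l ^ 2 := Finset.sum_le_sum fun l _ => myAbsLeSq (d l)
  constructor
  · intro h
    have e2 : ∑ l, |d l| = ∑ l, d l ^ 2 := le_antisymm h2 (by omega)
    have e1 : |∑ l, d l| = ∑ l, |d l| := by omega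
    refine ⟨(mySignIff d).mp e1, fun l => ?_⟩
    have := (Finset.sum_eq_sum_iff_of_le (fun l _ => myAbsLeSq (d l))).mp e2 l
      (Finset.mem_univ l)
    exact (myAbsEqSqIff (d l)).mp this
  · rintro ⟨hs, hb⟩
    have e1 : |∑ l, d l| = ∑ l, |d l| := (mySignIff d).mpr hs
    have e2 : ∑ l, |d l| = ∑ l, d l ^ 2 :=
      Finset.sum_congr rfl fun l _ => (myAbsEqSqIff (d l)).mpr (hb l)
    omega

/-- For vectors `v₁, …, v_k ∈ ℤ^N`,
`Σ_{i,j} |[vᵢ]₊ − [vⱼ]₊| ≤ Σ_{i,j} |vᵢ − vⱼ|₂²`, with equality iff after a permutation of the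
indices the vectors form a descending chain in the componentwise order and all pairwise
`ℓ^∞`-distances are at most 1. -/
theorem stmt11 (k N : ℕ) (v : Fin k → Fin N → ℤ) :
    (∑ i, ∑ j, |(∑ l, v i l) - (∑ l, v j l)|) ≤ (∑ i, ∑ j, ∑ l, (v i l - v j l) ^ 2) ∧
      ((∑ i, ∑ j, |(∑ l, v i l) - (∑ l, v j l)|) = (∑ i, ∑ j, ∑ l, (v i l - v j l) ^ 2) ↔
        ((∃ σ : Equiv.Perm (Fin k), ∀ a b : Fin k, a ≤ b → ∀ l, v (σ b) l ≤ v (σ a) l) ∧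
          (∀ i j : Fin k, ∀ l, |v i l - v j l| ≤ 1))) := by
  have hsub : ∀ i j : Fin k, (∑ l, v i l) - (∑ l, v j l) = ∑ l, (v i l - v j l) :=
    fun i j => (Finset.sum_sub_distrib _ _).symm
  have hpair : ∀ i j : Fin k, |(∑ l, v i l) - (∑ l, v j l)| ≤ ∑ l, (v i l - v j l) ^ 2 := by
    intro i j
    rw [hsub]
    calc |∑ l, (v i l - v j l)| ≤ ∑ l, |v i l - v j l| := Finset.abs_sum_le_sum_abs _ _
    _ ≤ ∑ l, (v i l - v j l) ^ 2 := Finset.sum_le_sum fun l _ => myAbsLeSq _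
  have hle : (∑ i, ∑ j, |(∑ l, v i l) - (∑ l, v j l)|) ≤
      (∑ i, ∑ j, ∑ l, (v i l - v j l) ^ 2) :=
    Finset.sum_le_sum fun i _ => Finset.sum_le_sum fun j _ => hpair i j
  refine ⟨hle, ?_⟩
  have hEqIff : (∑ i, ∑ j, |(∑ l, v i l) - (∑ l, v j l)|) =
      (∑ i, ∑ j, ∑ l, (v i l - v j l) ^ 2) ↔
      ∀ i j : Fin k, |(∑ l, v i l) - (∑ l, v j l)| = ∑ l, (v i l - v j l) ^ 2 := by
    rw [Finset.sum_eq_sum_iff_of_le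
      (fun i _ => Finset.sum_le_sum fun j _ => hpair i j)]
    constructor
    · intro h i j
      exact (Finset.sum_eq_sum_iff_of_le (fun j _ => hpair i j)).mp
        (h i (Finset.mem_univ i)) j (Finset.mem_univ j)
    · intro h i _
      exact Finset.sum_congr rfl fun j _ => h i j
  rw [hEqIff]
  constructor
  · intro h
    have hP : ∀ i j : Fin k,
        (((∀ l, 0 ≤ v i l - v j l) ∨ (∀ l, v i l - v j l ≤ 0)) ∧
          ∀ l, |v i l - v j l| ≤ 1) := by
      intro i j
      have := h i j
      rw [hsub] at this
      exact (myPair _).mp this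
    refine ⟨?_, fun i j l => (hP i j).2 l⟩
    -- sort by descending sums
    set f : Fin k → ℤ := fun i => -(∑ l, v i l) with hf
    refine ⟨Tuple.sort f, fun a b hab l => ?_⟩
    have hmono : f (Tuple.sort f a) ≤ f (Tuple.sort f b) := Tuple.monotone_sort f hab
    set i := Tuple.sort f a
    set j := Tuple.sort f b
    have hsum : (∑ l, v j l) ≤ ∑ l, v i l := by simp only [hf] at hmono; omega
    rcases (hP i j).1 with hc | hc
    · have := hc l; omega
    · -- v i ≤ v j componentwise, but Σ v j ≤ Σ v i, so equal
      have hsum2 : (∑ l, v i l) ≤ ∑ l, v j l :=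
        Finset.sum_le_sum fun l _ => by have := hc l; omega
      have heq : (∑ l, v i l) = ∑ l, v j l := le_antisymm hsum2 hsum
      have := (Finset.sum_eq_sum_iff_of_le
        (fun l _ => (by have := hc l; omega : v i l ≤ v j l))).mp heq l (Finset.mem_univ l)
      omega
  · rintro ⟨⟨σ, hσ⟩, hb⟩
    intro i j
    rw [hsub]
    refine (myPair _).mpr ⟨?_, fun l => hb i j l⟩
    set a := σ.symm i with ha
    set b := σ.symm j with hbdef
    have hi : σ a = i := σ.apply_symm_apply i
    have hj : σ b = j := σ.apply_symm_apply j
    rcases le_total a b with hab | hab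
    · left
      intro l
      have := hσ a b hab l
      rw [hi, hj] at this
      omega
    · right
      intro l
      have := hσ b a hab l
      rw [hi, hj] at this
      omega
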